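/- Let p be a probability density on S that is positive μ-almost everywhere, and let α ∈ [0,1). Recursively define p₁ = p and p_{t+1}(x) = p_t(x)^α / Z_t, where Z_t = ∫ p_t(x)^α dμ(x). Then every normalizer Z_t is finite and positive (so the sequence is well defined), and the sequence (p_t) converges in L¹(μ) to the uniform density u. -/

import Mathlib

open MeasureTheory Real Filter

/-- Skew-Fit Lemma A.3 (simple case): repeatedly tempering a positive density by an
exponent `α ∈ [0,1)` and renormalizing, i.e. `p_{t+1} = p_t^α / Z_t` with
`Z_t = ∫ p_t^α dμ`, yields well-defined (finite, positive) normalizers, and the sequence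
of densities converges in `L¹(μ)` to the uniform density `u = 1/μ(S)`. -/
theorem tempered_iteration_converges_to_uniform
    {S : Type*} [MeasurableSpace S] (μ : Measure S)
    (hμ0 : 0 < μ Set.univ) (hμfin : μ Set.univ < ⊤)
    (p : S → ℝ) (hpmeas : Measurable p) (hp0 : ∀ x, 0 ≤ p x) (hp1 : ∫ x, p x ∂μ = 1)
    (hppos : ∀ᵐ x ∂μ, 0 < p x)
    (α : ℝ) (hα : α ∈ Set.Ico (0 : ℝ) 1)
    (seq : ℕ → S → ℝ) (hseq0 : seq 0 = p)
    (hseqrec : ∀ t, seq (t + 1) = fun x => seq t x ^ α / ∫ y, seq t y ^ α ∂μ)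
    (u : S → ℝ) (hu : u = fun _ => 1 / (μ Set.univ).toReal) :
    (∀ t, Integrable (fun x => seq t x ^ α) μ ∧ 0 < ∫ x, seq t x ^ α ∂μ) ∧
      Tendsto (fun t => ∫ x, |seq t x - u x| ∂μ) atTop (nhds 0) := by
  have hfin : IsFiniteMeasure μ := ⟨by simpa using hμfin⟩
  set M : ℝ := (μ Set.univ).toReal with hM
  have hMpos : 0 < M := ENNReal.toReal_pos hμ0.ne' hμfin.ne
  -- p is integrable
  have hpint : Integrable p μ := by
    by_contra h
    rw [integral_undef h] at hp1
    norm_num at hp1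
  -- integrability of p^β for β ∈ [0,1]
  have hbound : ∀ β ∈ Set.Icc (0:ℝ) 1, ∀ x, p x ^ β ≤ 1 + p x := by
    intro β hβ x
    rcases le_or_gt (p x) 1 with h | h
    · calc p x ^ β ≤ 1 := Real.rpow_le_one (hp0 x) h hβ.1
        _ ≤ 1 + p x := le_add_of_nonneg_right (hp0 x)
    · calc p x ^ β ≤ p x ^ (1:ℝ) := Real.rpow_le_rpow_of_exponent_le h.le hβ.2
        _ = p x := Real.rpow_one _
        _ ≤ 1 + p x := le_add_of_nonneg_left one_pos.le
  have hint : ∀ β ∈ Set.Icc (0:ℝ) 1, Integrable (fun x => p x ^ β) μ := by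
    intro β hβ
    refine Integrable.mono' ((integrable_const 1).add hpint)
      ((hpmeas.pow measurable_const).aestronglyMeasurable) ?_
    filter_upwards with x
    rw [Real.norm_eq_abs, abs_of_nonneg (Real.rpow_nonneg (hp0 x) β)]
    exact hbound β hβ x
  -- positivity of Z(β) = ∫ p^β for β ∈ [0,1]
  have hZpos : ∀ β ∈ Set.Icc (0:ℝ) 1, 0 < ∫ x, p x ^ β ∂μ := by
    intro β hβ
    rw [integral_pos_iff_support_of_nonneg (fun x => Real.rpow_nonneg (hp0 x) β)
      (hint β hβ)]
    have : {x | 0 < p x} ⊆ Function.support fun x => p x ^ β := by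
      intro x hx
      exact (Real.rpow_pos_of_pos hx β).ne'
    calc 0 < μ Set.univ := hμ0
      _ = μ {x | 0 < p x} := by
          refine (measure_congr ?_).symm
          filter_upwards [hppos] with x hx
          exact eq_true hx
      _ ≤ μ (Function.support fun x => p x ^ β) := measure_mono this
  have hβmem : ∀ t : ℕ, α ^ t ∈ Set.Icc (0:ℝ) 1 :=
    fun t => ⟨pow_nonneg hα.1 t, pow_le_one₀ hα.1 hα.2.le⟩
  -- closed form
  have hform : ∀ t, seq t = fun x => p x ^ (α ^ t) / ∫ y, p y ^ (α ^ t) ∂μ := by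
    intro t
    induction t with
    | zero => simp [hseq0, hp1]
    | succ t ih =>
      have hZt := hZpos _ (hβmem t)
      funext x
      rw [hseqrec t, ih]
      have hpow : ∀ y, (p y ^ (α ^ t) / ∫ z, p z ^ (α ^ t) ∂μ) ^ α
          = p y ^ (α ^ (t+1)) / (∫ z, p z ^ (α ^ t) ∂μ) ^ α := by
        intro y
        rw [Real.div_rpow (Real.rpow_nonneg (hp0 y) _) hZt.le,
          ← Real.rpow_mul (hp0 y), ← pow_succ]
      simp only [hpow]
      rw [integral_div]
      have hc : ((∫ z, p z ^ (α ^ t) ∂μ) ^ α) ≠ 0 := (Real.rpow_pos_of_pos hZt α).ne'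
      have hB : (∫ z, p z ^ (α ^ (t+1)) ∂μ) ≠ 0 := (hZpos _ (hβmem (t+1))).ne'
      field_simp
  -- part 1
  have hpart1 : ∀ t, Integrable (fun x => seq t x ^ α) μ ∧ 0 < ∫ x, seq t x ^ α ∂μ := by
    intro t
    have hZt := hZpos _ (hβmem t)
    have hpow : (fun x => seq t x ^ α)
        = fun x => p x ^ (α ^ (t+1)) / (∫ z, p z ^ (α ^ t) ∂μ) ^ α := by
      funext x
      rw [hform t]
      rw [Real.div_rpow (Real.rpow_nonneg (hp0 x) _) hZt.le,
        ← Real.rpow_mul (hp0 x), ← pow_succ]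
    rw [hpow]
    constructor
    · exact (hint _ (hβmem (t+1))).div_const _
    · rw [integral_div]
      exact div_pos (hZpos _ (hβmem (t+1))) (Real.rpow_pos_of_pos hZt α)
  refine ⟨hpart1, ?_⟩
  -- convergence
  have hβ0 : Tendsto (fun t => α ^ t) atTop (nhds 0) :=
    tendsto_pow_atTop_nhds_zero_of_lt_one hα.1 hα.2
  -- a.e. pointwise: p x ^ (α^t) → 1
  have hptlim : ∀ᵐ x ∂μ, Tendsto (fun t => p x ^ (α ^ t)) atTop (nhds 1) := by
    filter_upwards [hppos] with x hx
    have : ContinuousAt (fun b : ℝ => p x ^ b) 0 := continuousAt_const_rpow hx.ne'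
    have := (this.tendsto.comp hβ0)
    simpa [Function.comp_def, Real.rpow_zero] using this
  -- DCT: ∫ |p^{α^t} - 1| → 0
  have hItend : Tendsto (fun t => ∫ x, |p x ^ (α ^ t) - 1| ∂μ) atTop (nhds 0) := by
    have := tendsto_integral_of_dominated_convergence (fun x => 2 + p x)
      (F := fun t x => |p x ^ (α ^ t) - 1|) (f := fun _ => (0:ℝ)) (μ := μ)
      (fun t => ((hpmeas.pow measurable_const).sub measurable_const).abs.aestronglyMeasurable)
      (((integrable_const 2).add hpint))
      (fun t => by
        filter_upwards with x
        rw [Real.norm_eq_abs, abs_abs]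
        calc |p x ^ (α ^ t) - 1| ≤ |p x ^ (α ^ t)| + |(1:ℝ)| := abs_sub _ _
          _ = p x ^ (α ^ t) + 1 := by
              rw [abs_of_nonneg (Real.rpow_nonneg (hp0 x) _), abs_one]
          _ ≤ (1 + p x) + 1 := by linarith [hbound _ (hβmem t) x]
          _ = 2 + p x := by ring)
      (by
        filter_upwards [hptlim] with x hx
        have := hx.sub (tendsto_const_nhds (x := (1:ℝ)))
        simpa using this.abs)
    simpa using this
  -- DCT: Z t → M
  have hZtend : Tendsto (fun t => ∫ x, p x ^ (α ^ t) ∂μ) atTop (nhds M) := by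
    have := tendsto_integral_of_dominated_convergence (fun x => 1 + p x)
      (F := fun t x => p x ^ (α ^ t)) (f := fun _ => (1:ℝ)) (μ := μ)
      (fun t => (hpmeas.pow measurable_const).aestronglyMeasurable)
      ((integrable_const 1).add hpint)
      (fun t => by
        filter_upwards with x
        rw [Real.norm_eq_abs, abs_of_nonneg (Real.rpow_nonneg (hp0 x) _)]
        exact hbound _ (hβmem t) x)
      hptlim
    simpa [integral_const, smul_eq_mul, measureReal_def, hM] using this
  -- the dominating sequence
  set g : ℕ → ℝ := fun t =>
    (∫ x, |p x ^ (α ^ t) - 1| ∂μ) / (∫ x, p x ^ (α ^ t) ∂μ)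
      + M * |(∫ x, p x ^ (α ^ t) ∂μ)⁻¹ - M⁻¹| with hg
  have hgtend : Tendsto g atTop (nhds 0) := by
    have h1 : Tendsto (fun t => (∫ x, |p x ^ (α ^ t) - 1| ∂μ) / (∫ x, p x ^ (α ^ t) ∂μ))
        atTop (nhds (0 / M)) := hItend.div hZtend hMpos.ne'
    have h2 : Tendsto (fun t => M * |(∫ x, p x ^ (α ^ t) ∂μ)⁻¹ - M⁻¹|)
        atTop (nhds (M * |M⁻¹ - M⁻¹|)) :=
      tendsto_const_nhds.mul ((hZtend.inv₀ hMpos.ne').sub tendsto_const_nhds).abs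
    have := h1.add h2
    simpa using this
  refine squeeze_zero (fun t => integral_nonneg fun x => abs_nonneg _) (fun t => ?_) hgtend
  -- bound ∫ |seq t - u| ≤ g t
  have hZt := hZpos _ (hβmem t)
  set Z : ℝ := ∫ x, p x ^ (α ^ t) ∂μ with hZ
  have hmono : ∀ x, |seq t x - u x|
      ≤ |p x ^ (α ^ t) - 1| / Z + |Z⁻¹ - M⁻¹| := by
    intro x
    rw [hform t, hu, ← hZ]
    have key : p x ^ (α ^ t) / Z - 1 / M
        = (p x ^ (α ^ t) - 1) / Z + (Z⁻¹ - M⁻¹) := by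
      field_simp
      ring
    rw [key]
    calc |(p x ^ (α ^ t) - 1) / Z + (Z⁻¹ - M⁻¹)|
        ≤ |(p x ^ (α ^ t) - 1) / Z| + |Z⁻¹ - M⁻¹| := abs_add_le _ _
      _ = |p x ^ (α ^ t) - 1| / Z + |Z⁻¹ - M⁻¹| := by
          rw [abs_div, abs_of_pos hZt]
  have hi0 : Integrable (fun x => p x ^ (α ^ t) - 1) μ := by
    exact (hint _ (hβmem t)).sub (integrable_const (1:ℝ))
  have hi1 : Integrable (fun x => |p x ^ (α ^ t) - 1| / Z) μ := hi0.abs.div_const _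
  have hrhsint : Integrable (fun x => |p x ^ (α ^ t) - 1| / Z + |Z⁻¹ - M⁻¹|) μ :=
    hi1.add (integrable_const _)
  calc ∫ x, |seq t x - u x| ∂μ
      ≤ ∫ x, (|p x ^ (α ^ t) - 1| / Z + |Z⁻¹ - M⁻¹|) ∂μ :=
        integral_mono_of_nonneg (Eventually.of_forall fun x => abs_nonneg _) hrhsint
          (Eventually.of_forall hmono)
    _ = (∫ x, |p x ^ (α ^ t) - 1| ∂μ) / Z + M * |Z⁻¹ - M⁻¹| := by
        rw [integral_add hi1 (integrable_const _), integral_div, integral_const, smul_eq_mul, measureReal_def]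
    _ = g t := rfl
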